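/- Let h = h(t,x,v) be such that h(t,x,·) and ∂_x h(t,x,·) are square integrable against |v| on ℝ for x ∈ {0,1}, satisfying the boundary conditions h(t,0,v) = k₀₀ h(t,0,−v) + k₁₀ h(t,1,v) for v > 0, h(t,1,v) = k₀₁ h(t,0,v) + k₁₁ h(t,1,−v) for v < 0, and the derivative boundary conditions ∂_x h(t,0,v) = −k₀₀ ∂_x h(t,0,−v) + k₁₀ ∂_x h(t,1,v) for v > 0, ∂_x h(t,1,v) = k₀₁ ∂_x h(t,0,v) − k₁₁ ∂_x h(t,1,−v) for v < 0. Assume k₀₀ + k₀₁ = 1 and k₁₁ + k₁₀ = 1, and let a ≥ 0. Then −∫_ℝ (v/2)(h²(t,1,v) − h²(t,0,v)) dv − ∫_ℝ (v/2)((∂_x h)²(t,1,v) − (∂_x h)²(t,0,v)) dv − a(u∂_x u(t,1) − u∂_x u(t,0)) ≤ I(t,ε), where I(t,ε) = −2k₀₀(1−k₀₀)(A + A_x) − 2k₁₁(1−k₁₁)(B + B_x) + 2(|k₁₁(1−k₀₀)| + |k₀₀(1−k₁₁)|)(√(AB) + √(A_xB_x)) + 4a(|1−k₁₁|√B + |1−k₀₀|√A)(|k₀₀|√A_x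 + |k₁₁|√B_x). -/

import Mathlib

open MeasureTheory Real Set

/-- The global Maxwellian `M(v) = (2π)^{-1/2} e^{-v²/2}`. -/
noncomputable def Mw (v : ℝ) : ℝ := (Real.sqrt (2 * Real.pi))⁻¹ * Real.exp (-(v ^ 2) / 2)

/-- `√M`. -/
noncomputable def sM (v : ℝ) : ℝ := Real.sqrt (Mw v)

/-- Squared `L²` norm on `Ω = [0,1] × ℝ`: `‖g‖² = ∫₀¹ ∫_ℝ g² dv dx`. -/
noncomputable def nSq (g : ℝ → ℝ → ℝ) : ℝ := ∫ x in (0:ℝ)..1, ∫ v : ℝ, (g x v) ^ 2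

/-- Partial derivative in the spatial variable `x`. -/
noncomputable def pdx (g : ℝ → ℝ → ℝ) : ℝ → ℝ → ℝ := fun x v => deriv (fun y => g y v) x

/-- `‖g‖_V² = ‖g‖² + ‖∂ₓ g‖²`. -/
noncomputable def nVSq (g : ℝ → ℝ → ℝ) : ℝ := nSq g + nSq (pdx g)

/-- `‖g‖_ω² = ‖g‖² + ‖∂_v g‖² + ‖v g‖²`. -/
noncomputable def nOmSq (g : ℝ → ℝ → ℝ) : ℝ :=
  nSq g + nSq (fun x v => deriv (g x) v) + nSq (fun x v => v * g x v)

/-- The weighted projection `(Πg)(x,v) = (∫_ℝ g(x,w)√M(w) dw)√M(v)`. -/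
noncomputable def Proj (g : ℝ → ℝ → ℝ) : ℝ → ℝ → ℝ := fun x v => (∫ w : ℝ, g x w * sM w) * sM v

/-- Boundary functional `A(t) = −∫_{-∞}^0 (v/2) h(t,0,v)² dv`. -/
noncomputable def Abd (h : ℝ → ℝ → ℝ → ℝ) (t : ℝ) : ℝ := -∫ v in Iio (0:ℝ), (v / 2) * (h t 0 v) ^ 2

/-- Boundary functional `B(t) = ∫_0^∞ (v/2) h(t,1,v)² dv`. -/
noncomputable def Bbd (h : ℝ → ℝ → ℝ → ℝ) (t : ℝ) : ℝ := ∫ v in Ioi (0:ℝ), (v / 2) * (h t 1 v) ^ 2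

/-- Boundary functional `A_x(t) = −∫_{-∞}^0 (v/2) (∂ₓh)(t,0,v)² dv`. -/
noncomputable def Axbd (h : ℝ → ℝ → ℝ → ℝ) (t : ℝ) : ℝ :=
  -∫ v in Iio (0:ℝ), (v / 2) * (pdx (h t) 0 v) ^ 2

/-- Boundary functional `B_x(t) = ∫_0^∞ (v/2) (∂ₓh)(t,1,v)² dv`. -/
noncomputable def Bxbd (h : ℝ → ℝ → ℝ → ℝ) (t : ℝ) : ℝ :=
  ∫ v in Ioi (0:ℝ), (v / 2) * (pdx (h t) 1 v) ^ 2

/-- `C_B(t) = ((√A−√B)² + (√Aₓ−√Bₓ)²)/(2(√A+√B)(√Aₓ+√Bₓ))`. -/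
noncomputable def CB (h : ℝ → ℝ → ℝ → ℝ) (t : ℝ) : ℝ :=
  ((Real.sqrt (Abd h t) - Real.sqrt (Bbd h t)) ^ 2
      + (Real.sqrt (Axbd h t) - Real.sqrt (Bxbd h t)) ^ 2) /
    (2 * (Real.sqrt (Abd h t) + Real.sqrt (Bbd h t))
      * (Real.sqrt (Axbd h t) + Real.sqrt (Bxbd h t)))

/-- The macroscopic density `σ(t,x) = ∫_ℝ h √M dv`. -/
noncomputable def dens (h : ℝ → ℝ → ℝ → ℝ) (t x : ℝ) : ℝ := ∫ v : ℝ, h t x v * sM v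

/-- The macroscopic flux `u(t,x) = ∫_ℝ v h √M dv`. -/
noncomputable def flux (h : ℝ → ℝ → ℝ → ℝ) (t x : ℝ) : ℝ := ∫ v : ℝ, v * h t x v * sM v

/-- The weighted VFP equation `ε ∂ₜh + v ∂ₓh − (1/ε) L h = E (∂ᵥ − v/2) h` on
`[0,∞) × [0,1] × ℝ`, with `L h = (1/2)h − (v²/4)h + ∂ᵥ²h` in strong form. -/
def IsVFPSolution (ε : ℝ) (E : ℝ → ℝ → ℝ) (h : ℝ → ℝ → ℝ → ℝ) : Prop :=
  ∀ t ≥ (0:ℝ), ∀ x ∈ Icc (0:ℝ) 1, ∀ v : ℝ,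
    ε * deriv (fun s => h s x v) t + v * deriv (fun y => h t y v) x
        - (1 / ε) * ((1 / 2) * h t x v - (v ^ 2 / 4) * h t x v + deriv (deriv (h t x)) v)
      = E t x * (deriv (h t x) v - (v / 2) * h t x v)




lemma Mw_pos (v : ℝ) : 0 < Mw v := by
  unfold Mw
  positivity

lemma sM_pos (v : ℝ) : 0 < sM v := Real.sqrt_pos.mpr (Mw_pos v)

lemma sM_sq (v : ℝ) : sM v ^ 2 = Mw v := Real.sq_sqrt (Mw_pos v).le

lemma Mw_even (v : ℝ) : Mw (-v) = Mw v := by unfold Mw; rw [neg_pow]; norm_num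

lemma sM_even (v : ℝ) : sM (-v) = sM v := by unfold sM; rw [Mw_even]

lemma measurable_Mw : Measurable Mw := by unfold Mw; fun_prop

lemma measurable_sM : Measurable sM := by
  unfold sM; exact measurable_Mw.sqrt

lemma refl_int (f : ℝ → ℝ) : ∫ v in Iio (0:ℝ), f v = ∫ v in Ioi (0:ℝ), f (-v) := by
  rw [integral_comp_neg_Ioi, neg_zero, integral_Iic_eq_integral_Iio]

lemma split_int (f : ℝ → ℝ) (hf : Integrable f) :
    ∫ v, f v = (∫ v in Iio (0:ℝ), f v) + ∫ v in Ioi (0:ℝ), f v := by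
  rw [← integral_Iic_eq_integral_Iio,
    ← setIntegral_union (Iic_disjoint_Ioi le_rfl) measurableSet_Ioi hf.integrableOn hf.integrableOn,
    Iic_union_Ioi, Measure.restrict_univ]

lemma aesm_trace {f : ℝ → ℝ} (hf : Integrable (fun v => v * f v * sM v)) :
    AEStronglyMeasurable f (volume : Measure ℝ) := by
  have hw : Measurable fun v : ℝ => (v * sM v)⁻¹ := (measurable_id.mul measurable_sM).inv
  have : AEStronglyMeasurable (fun v => (v * f v * sM v) * (v * sM v)⁻¹) (volume : Measure ℝ) :=
    hf.aestronglyMeasurable.mul hw.aestronglyMeasurable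
  refine this.congr ?_
  have h0 : ∀ᵐ v : ℝ, v ≠ 0 := by
    have : (volume : Measure ℝ) {(0:ℝ)} = 0 := measure_singleton 0
    exact ae_iff.mpr (by simpa using this)
  filter_upwards [h0] with v hv
  have hs : sM v ≠ 0 := (sM_pos v).ne'
  field_simp


lemma norm_rpow_two (x : ℝ) : ‖x‖ ^ (2:ℝ) = x ^ 2 := by
  rw [Real.norm_eq_abs, show (2:ℝ) = ((2:ℕ):ℝ) by norm_num, Real.rpow_natCast, sq_abs]

lemma cs_integrable {f g : ℝ → ℝ}
    (hfm : AEStronglyMeasurable f (volume.restrict (Ioi (0:ℝ))))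
    (hgm : AEStronglyMeasurable g (volume.restrict (Ioi (0:ℝ))))
    (hf2 : IntegrableOn (fun v => v * f v ^ 2) (Ioi (0:ℝ)))
    (hg2 : IntegrableOn (fun v => v * g v ^ 2) (Ioi (0:ℝ))) :
    IntegrableOn (fun v => v * f v * g v) (Ioi (0:ℝ)) := by
  have hpos : ∀ᵐ v ∂(volume.restrict (Ioi (0:ℝ))), v ∈ Ioi (0:ℝ) :=
    ae_restrict_mem measurableSet_Ioi
  refine Integrable.mono' ((hf2.add hg2).div_const 2)
    ((aestronglyMeasurable_id.mul hfm).mul hgm) ?_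
  filter_upwards [hpos] with v hv
  have hv0 : (0:ℝ) ≤ v := le_of_lt hv
  have habs : |f v * g v| ≤ (f v ^ 2 + g v ^ 2) / 2 := by
    rw [abs_mul]
    nlinarith [sq_nonneg (|f v| - |g v|), sq_abs (f v), sq_abs (g v),
      abs_nonneg (f v), abs_nonneg (g v)]
  calc ‖v * f v * g v‖ = v * |f v * g v| := by
        rw [mul_assoc, norm_mul, Real.norm_of_nonneg hv0, Real.norm_eq_abs]
    _ ≤ v * ((f v ^ 2 + g v ^ 2) / 2) := by nlinarith
    _ = (v * f v ^ 2 + v * g v ^ 2) / 2 := by ring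

lemma cs_bound {f g : ℝ → ℝ}
    (hfm : AEStronglyMeasurable f (volume.restrict (Ioi (0:ℝ))))
    (hgm : AEStronglyMeasurable g (volume.restrict (Ioi (0:ℝ))))
    (hf2 : IntegrableOn (fun v => v * f v ^ 2) (Ioi (0:ℝ)))
    (hg2 : IntegrableOn (fun v => v * g v ^ 2) (Ioi (0:ℝ))) :
    |∫ v in Ioi (0:ℝ), v * f v * g v| ≤
      Real.sqrt (∫ v in Ioi (0:ℝ), v * f v ^ 2) * Real.sqrt (∫ v in Ioi (0:ℝ), v * g v ^ 2) := by
  set μ := volume.restrict (Ioi (0:ℝ)) with hμ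
  have hpos : ∀ᵐ v ∂μ, v ∈ Ioi (0:ℝ) := ae_restrict_mem measurableSet_Ioi
  set F : ℝ → ℝ := fun v => Real.sqrt v * f v with hF
  set G : ℝ → ℝ := fun v => Real.sqrt v * g v with hG
  have hFm : AEStronglyMeasurable F μ :=
    (Real.continuous_sqrt.measurable.aestronglyMeasurable).mul hfm
  have hGm : AEStronglyMeasurable G μ :=
    (Real.continuous_sqrt.measurable.aestronglyMeasurable).mul hgm
  have hF2 : (fun v => F v ^ 2) =ᵐ[μ] fun v => v * f v ^ 2 := by
    filter_upwards [hpos] with v hv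
    simp only [hF, mul_pow, Real.sq_sqrt (le_of_lt hv)]
  have hG2 : (fun v => G v ^ 2) =ᵐ[μ] fun v => v * g v ^ 2 := by
    filter_upwards [hpos] with v hv
    simp only [hG, mul_pow, Real.sq_sqrt (le_of_lt hv)]
  have hFL : MemLp F 2 μ := (memLp_two_iff_integrable_sq hFm).2 (hf2.congr hF2.symm)
  have hGL : MemLp G 2 μ := (memLp_two_iff_integrable_sq hGm).2 (hg2.congr hG2.symm)
  have hconj : (2:ℝ).HolderConjugate 2 := Real.HolderConjugate.two_two
  have key := integral_mul_norm_le_Lp_mul_Lq (μ := μ) hconj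
    (by simpa using hFL) (by simpa using hGL)
  have habs : (fun v => ‖F v‖ * ‖G v‖) =ᵐ[μ] fun v => |v * f v * g v| := by
    filter_upwards [hpos] with v hv
    have heq : F v * G v = v * f v * g v := by
      simp only [hF, hG]
      rw [show Real.sqrt v * f v * (Real.sqrt v * g v)
          = (Real.sqrt v * Real.sqrt v) * (f v * g v) by ring,
        Real.mul_self_sqrt (le_of_lt hv)]
      ring
    rw [Real.norm_eq_abs, Real.norm_eq_abs, ← abs_mul, heq]
  have hr1 : ∫ v, ‖F v‖ ^ (2:ℝ) ∂μ = ∫ v in Ioi (0:ℝ), v * f v ^ 2 := by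
    rw [← hμ]
    refine integral_congr_ae ?_
    filter_upwards [hF2] with v hv
    rw [norm_rpow_two, hv]
  have hr2 : ∫ v, ‖G v‖ ^ (2:ℝ) ∂μ = ∫ v in Ioi (0:ℝ), v * g v ^ 2 := by
    rw [← hμ]
    refine integral_congr_ae ?_
    filter_upwards [hG2] with v hv
    rw [norm_rpow_two, hv]
  calc |∫ v in Ioi (0:ℝ), v * f v * g v|
      = ‖∫ v, v * f v * g v ∂μ‖ := (Real.norm_eq_abs _).symm
    _ ≤ ∫ v, ‖v * f v * g v‖ ∂μ := norm_integral_le_integral_norm _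
    _ = ∫ v, ‖F v‖ * ‖G v‖ ∂μ := by
        refine (integral_congr_ae ?_)
        filter_upwards [habs] with v hv
        rw [hv, Real.norm_eq_abs]
    _ ≤ (∫ v, ‖F v‖ ^ (2:ℝ) ∂μ) ^ ((1:ℝ)/2) * (∫ v, ‖G v‖ ^ (2:ℝ) ∂μ) ^ ((1:ℝ)/2) := key
    _ = Real.sqrt (∫ v in Ioi (0:ℝ), v * f v ^ 2) * Real.sqrt (∫ v in Ioi (0:ℝ), v * g v ^ 2) := by
        rw [hr1, hr2, ← Real.sqrt_eq_rpow, ← Real.sqrt_eq_rpow]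



lemma hasDeriv_negMw (v : ℝ) : HasDerivAt (fun w => -Mw w) (v * Mw v) v := by
  have h1 : HasDerivAt (fun w : ℝ => -(w ^ 2) / 2) (-v) v := by
    have := ((hasDerivAt_pow 2 v).neg).div_const 2
    simpa using this.congr_deriv (by ring_nf)
  have h2 : HasDerivAt (fun w : ℝ => Real.exp (-(w ^ 2) / 2))
      (Real.exp (-(v ^ 2) / 2) * (-v)) v := (Real.hasDerivAt_exp _).comp v h1
  have h3 : HasDerivAt (fun y => -((Real.sqrt (2 * Real.pi))⁻¹ * Real.exp (-(y ^ 2) / 2))) _ v :=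
    (h2.const_mul ((Real.sqrt (2 * Real.pi))⁻¹)).neg
  unfold Mw
  convert h3 using 1
  ring

lemma tendsto_negMw : Filter.Tendsto (fun w => -Mw w) Filter.atTop (nhds 0) := by
  have h1 : Filter.Tendsto (fun w : ℝ => -(w ^ 2) / 2) Filter.atTop Filter.atBot := by
    apply Filter.Tendsto.atBot_div_const (by norm_num)
    exact Filter.tendsto_neg_atBot_iff.mpr (Filter.tendsto_pow_atTop (by norm_num))
  have h2 : Filter.Tendsto (fun w : ℝ => Real.exp (-(w ^ 2) / 2)) Filter.atTop (nhds 0) :=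
    Real.tendsto_exp_atBot.comp h1
  have := (h2.const_mul ((Real.sqrt (2 * Real.pi))⁻¹)).neg
  simpa [Mw] using this

lemma intOn_vMw : IntegrableOn (fun v => v * Mw v) (Ioi (0:ℝ)) := by
  refine integrableOn_Ioi_deriv_of_nonneg ?_ (fun x _ => hasDeriv_negMw x) ?_ tendsto_negMw
  · exact (hasDeriv_negMw 0).continuousAt.continuousWithinAt
  · intro x hx
    exact mul_nonneg (le_of_lt hx) (Mw_pos x).le

lemma int_vMw_le_one : ∫ v in Ioi (0:ℝ), v * Mw v ≤ 1 := by
  have := integral_Ioi_of_hasDerivAt_of_tendsto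
    (hasDeriv_negMw 0).continuousAt.continuousWithinAt
    (fun x _ => hasDeriv_negMw x) intOn_vMw tendsto_negMw
  rw [this]
  have h1 : Mw 0 ≤ 1 := by
    unfold Mw
    rw [show -((0:ℝ) ^ 2) / 2 = 0 by norm_num, Real.exp_zero, mul_one]
    rw [inv_le_one_iff₀]
    right
    rw [show (1:ℝ) = Real.sqrt 1 by simp]
    exact Real.sqrt_le_sqrt (by nlinarith [Real.pi_gt_three])
  simpa using h1


-- auxiliary lemmas
section
variable {f0 f1 : ℝ → ℝ}

lemma sq_int_aesm (hm0 : AEStronglyMeasurable f0 (volume : Measure ℝ)) :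
    AEStronglyMeasurable (fun v => (v/2) * f0 v ^ 2) (volume : Measure ℝ) := by
  have h1 : AEStronglyMeasurable (fun v => f0 v ^ 2) (volume : Measure ℝ) :=
    (hm0.mul hm0).congr (Filter.Eventually.of_forall fun v => (pow_two (f0 v)).symm)
  exact ((measurable_id.div_const 2).aestronglyMeasurable).mul h1

lemma sq_int (h0 : Integrable (fun v => |v| * f0 v ^ 2))
    (hm0 : AEStronglyMeasurable f0 (volume : Measure ℝ)) :
    Integrable (fun v => (v/2) * f0 v ^ 2) := by
  refine Integrable.mono' h0 (sq_int_aesm hm0) ?_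
  refine Filter.Eventually.of_forall fun v => ?_
  rw [Real.norm_eq_abs, abs_mul, abs_div, abs_two, abs_of_nonneg (sq_nonneg (f0 v))]
  have h2 : (0:ℝ) ≤ f0 v ^ 2 := sq_nonneg _
  have h3 : (0:ℝ) ≤ |v| := abs_nonneg v
  nlinarith

lemma sq_int_refl (h0 : Integrable (fun v => |v| * f0 v ^ 2))
    (hm0 : AEStronglyMeasurable (fun v => f0 (-v)) (volume : Measure ℝ)) :
    Integrable (fun v => (v/2) * f0 (-v) ^ 2) := by
  have h0' : Integrable (fun v => |v| * f0 (-v) ^ 2) := by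
    have := h0.comp_neg
    refine this.congr (Filter.Eventually.of_forall fun v => ?_)
    simp [abs_neg]
  exact sq_int h0' hm0
end

set_option maxHeartbeats 2000000 in
lemma bdry_est (f0 f1 : ℝ → ℝ) (c1 c2 d1 d2 : ℝ)
    (h0 : Integrable (fun v => |v| * f0 v ^ 2)) (h1 : Integrable (fun v => |v| * f1 v ^ 2))
    (hm0 : AEStronglyMeasurable f0 (volume : Measure ℝ))
    (hm1 : AEStronglyMeasurable f1 (volume : Measure ℝ))
    (hm0r : AEStronglyMeasurable (fun v => f0 (-v)) (volume : Measure ℝ))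
    (bc0 : ∀ v > (0:ℝ), f0 v = c1 * f0 (-v) + c2 * f1 v)
    (bc1 : ∀ v < (0:ℝ), f1 v = d1 * f0 v + d2 * f1 (-v)) :
    -∫ v, (v/2) * (f1 v ^ 2 - f0 v ^ 2)
      ≤ (c1^2 + d1^2 - 1) * (-∫ v in Iio (0:ℝ), (v/2) * f0 v ^ 2)
        + (c2^2 + d2^2 - 1) * (∫ v in Ioi (0:ℝ), (v/2) * f1 v ^ 2)
        + (|c1*c2| + |d1*d2|) * (2 * (Real.sqrt (-∫ v in Iio (0:ℝ), (v/2) * f0 v ^ 2)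
            * Real.sqrt (∫ v in Ioi (0:ℝ), (v/2) * f1 v ^ 2))) := by
  set A : ℝ := -∫ v in Iio (0:ℝ), (v/2) * f0 v ^ 2 with hA
  set B : ℝ := ∫ v in Ioi (0:ℝ), (v/2) * f1 v ^ 2 with hB
  have I0 := sq_int h0 hm0
  have I1 := sq_int h1 hm1
  have I0r := sq_int_refl h0 hm0r
  have i0rOn : IntegrableOn (fun v => (v/2) * f0 (-v) ^ 2) (Ioi (0:ℝ)) := I0r.integrableOn
  have i1On : IntegrableOn (fun v => (v/2) * f1 v ^ 2) (Ioi (0:ℝ)) := I1.integrableOn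
  have i2r0 : IntegrableOn (fun v => v * f0 (-v) ^ 2) (Ioi (0:ℝ)) := by
    refine (i0rOn.const_mul 2).congr (Filter.Eventually.of_forall fun v => ?_)
    ring
  have i21 : IntegrableOn (fun v => v * f1 v ^ 2) (Ioi (0:ℝ)) := by
    refine (i1On.const_mul 2).congr (Filter.Eventually.of_forall fun v => ?_)
    ring
  have icross : IntegrableOn (fun v => v * f0 (-v) * f1 v) (Ioi (0:ℝ)) :=
    cs_integrable hm0r.restrict hm1.restrict i2r0 i21
  have csX := cs_bound hm0r.restrict hm1.restrict i2r0 i21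
  set X : ℝ := ∫ v in Ioi (0:ℝ), v * f0 (-v) * f1 v with hX
  have R0 : ∫ v in Iio (0:ℝ), (v/2) * f0 v ^ 2 = -∫ v in Ioi (0:ℝ), (v/2) * f0 (-v) ^ 2 := by
    calc ∫ v in Iio (0:ℝ), (v/2) * f0 v ^ 2 = ∫ v in Ioi (0:ℝ), ((-v)/2) * f0 (-v) ^ 2 :=
          refl_int _
      _ = ∫ v in Ioi (0:ℝ), -((v/2) * f0 (-v) ^ 2) := by
          congr 1; funext v; ring
      _ = -∫ v in Ioi (0:ℝ), (v/2) * f0 (-v) ^ 2 := integral_neg _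
  have R1 : ∫ v in Iio (0:ℝ), (v/2) * f1 v ^ 2 = -∫ v in Ioi (0:ℝ), (v/2) * f1 (-v) ^ 2 := by
    calc ∫ v in Iio (0:ℝ), (v/2) * f1 v ^ 2 = ∫ v in Ioi (0:ℝ), ((-v)/2) * f1 (-v) ^ 2 :=
          refl_int _
      _ = ∫ v in Ioi (0:ℝ), -((v/2) * f1 (-v) ^ 2) := by
          congr 1; funext v; ring
      _ = -∫ v in Ioi (0:ℝ), (v/2) * f1 (-v) ^ 2 := integral_neg _
  have hA' : (∫ v in Ioi (0:ℝ), (v/2) * f0 (-v) ^ 2) = A := by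
    rw [hA, R0, neg_neg]
  have S0 : ∫ v in Ioi (0:ℝ), (v/2) * f0 v ^ 2
      = c1^2 * A + c2^2 * B + (c1*c2) * X := by
    have e1 : ∫ v in Ioi (0:ℝ), (v/2) * f0 v ^ 2
        = ∫ v in Ioi (0:ℝ), (c1^2 * ((v/2) * f0 (-v) ^ 2) + c2^2 * ((v/2) * f1 v ^ 2)
            + (c1*c2) * (v * f0 (-v) * f1 v)) := by
      refine setIntegral_congr_fun measurableSet_Ioi fun v hv => ?_
      rw [bc0 v hv]; ring
    have j1 : IntegrableOn (fun v => c1^2 * ((v/2) * f0 (-v) ^ 2)) (Ioi (0:ℝ)) :=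
      i0rOn.const_mul _
    have j2 : IntegrableOn (fun v => c2^2 * ((v/2) * f1 v ^ 2)) (Ioi (0:ℝ)) :=
      i1On.const_mul _
    have j3 : IntegrableOn (fun v => (c1*c2) * (v * f0 (-v) * f1 v)) (Ioi (0:ℝ)) :=
      icross.const_mul _
    have j12 : IntegrableOn
        (fun v => c1^2 * ((v/2) * f0 (-v) ^ 2) + c2^2 * ((v/2) * f1 v ^ 2)) (Ioi (0:ℝ)) :=
      j1.add j2
    rw [e1, integral_add j12 j3, integral_add j1 j2, integral_const_mul, integral_const_mul,
      integral_const_mul, hA', ← hB, ← hX]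
  have S1 : ∫ v in Ioi (0:ℝ), (v/2) * f1 (-v) ^ 2
      = d1^2 * A + d2^2 * B + (d1*d2) * X := by
    have e1 : ∫ v in Ioi (0:ℝ), (v/2) * f1 (-v) ^ 2
        = ∫ v in Ioi (0:ℝ), (d1^2 * ((v/2) * f0 (-v) ^ 2) + d2^2 * ((v/2) * f1 v ^ 2)
            + (d1*d2) * (v * f0 (-v) * f1 v)) := by
      refine setIntegral_congr_fun measurableSet_Ioi fun v hv => ?_
      have hv' : (-v) < 0 := by simpa using hv.out
      rw [bc1 (-v) hv', neg_neg]; ring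
    have j1 : IntegrableOn (fun v => d1^2 * ((v/2) * f0 (-v) ^ 2)) (Ioi (0:ℝ)) :=
      i0rOn.const_mul _
    have j2 : IntegrableOn (fun v => d2^2 * ((v/2) * f1 v ^ 2)) (Ioi (0:ℝ)) :=
      i1On.const_mul _
    have j3 : IntegrableOn (fun v => (d1*d2) * (v * f0 (-v) * f1 v)) (Ioi (0:ℝ)) :=
      icross.const_mul _
    have j12 : IntegrableOn
        (fun v => d1^2 * ((v/2) * f0 (-v) ^ 2) + d2^2 * ((v/2) * f1 v ^ 2)) (Ioi (0:ℝ)) :=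
      j1.add j2
    rw [e1, integral_add j12 j3, integral_add j1 j2, integral_const_mul, integral_const_mul,
      integral_const_mul, hA', ← hB, ← hX]
  have EL : -∫ v, (v/2) * (f1 v ^ 2 - f0 v ^ 2)
      = (∫ v, (v/2) * f0 v ^ 2) - ∫ v, (v/2) * f1 v ^ 2 := by
    rw [show (fun v : ℝ => (v/2) * (f1 v ^ 2 - f0 v ^ 2))
        = fun v => (v/2) * f1 v ^ 2 - (v/2) * f0 v ^ 2 from funext fun v => by ring,
      integral_sub I1 I0]
    ring
  have E0 := split_int _ I0
  have E1 := split_int _ I1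
  have key : -∫ v, (v/2) * (f1 v ^ 2 - f0 v ^ 2)
      = (c1^2 + d1^2 - 1) * A + (c2^2 + d2^2 - 1) * B + (c1*c2 + d1*d2) * X := by
    rw [EL, E0, E1, S0, R1, S1]
    have : ∫ v in Iio (0:ℝ), (v/2) * f0 v ^ 2 = -A := by rw [hA, neg_neg]
    rw [this]; ring
  -- nonnegativity
  have hAnn : 0 ≤ A := by
    have hle : ∫ v in Iio (0:ℝ), (v/2) * f0 v ^ 2 ≤ 0 := by
      refine integral_nonpos_of_ae ?_
      filter_upwards [ae_restrict_mem measurableSet_Iio] with v hv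
      have hv' : v < 0 := hv
      show (v/2) * f0 v ^ 2 ≤ (0:ℝ)
      nlinarith [sq_nonneg (f0 v)]
    rw [hA]; linarith
  have hBnn : 0 ≤ B := by
    rw [hB]
    refine integral_nonneg_of_ae ?_
    filter_upwards [ae_restrict_mem measurableSet_Ioi] with v hv
    have hv' : (0:ℝ) < v := hv
    show (0:ℝ) ≤ (v/2) * f1 v ^ 2
    nlinarith [sq_nonneg (f1 v)]
  have e2A : ∫ v in Ioi (0:ℝ), v * f0 (-v) ^ 2 = 2 * A := by
    rw [← hA']
    rw [show (2:ℝ) * ∫ v in Ioi (0:ℝ), (v/2) * f0 (-v) ^ 2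
        = ∫ v in Ioi (0:ℝ), 2 * ((v/2) * f0 (-v) ^ 2) from (integral_const_mul _ _).symm]
    refine setIntegral_congr_fun measurableSet_Ioi fun v _ => ?_
    ring
  have e2B : ∫ v in Ioi (0:ℝ), v * f1 v ^ 2 = 2 * B := by
    rw [hB]
    rw [show (2:ℝ) * ∫ v in Ioi (0:ℝ), (v/2) * f1 v ^ 2
        = ∫ v in Ioi (0:ℝ), 2 * ((v/2) * f1 v ^ 2) from (integral_const_mul _ _).symm]
    refine setIntegral_congr_fun measurableSet_Ioi fun v _ => ?_
    ring
  have hXb : |X| ≤ 2 * (Real.sqrt A * Real.sqrt B) := by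
    calc |X| ≤ Real.sqrt (2*A) * Real.sqrt (2*B) := by rw [← e2A, ← e2B]; exact csX
      _ = 2 * (Real.sqrt A * Real.sqrt B) := by
          rw [Real.sqrt_mul (by norm_num : (0:ℝ) ≤ 2) A,
            Real.sqrt_mul (by norm_num : (0:ℝ) ≤ 2) B]
          have h2 : Real.sqrt 2 * Real.sqrt 2 = 2 := Real.mul_self_sqrt (by norm_num)
          linear_combination (Real.sqrt A * Real.sqrt B) * h2
  have h5 : (c1*c2 + d1*d2) * X ≤ (|c1*c2| + |d1*d2|) * (2*(Real.sqrt A * Real.sqrt B)) := by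
    calc (c1*c2 + d1*d2) * X ≤ |(c1*c2 + d1*d2) * X| := le_abs_self _
      _ = |c1*c2 + d1*d2| * |X| := abs_mul _ _
      _ ≤ (|c1*c2| + |d1*d2|) * |X| :=
          mul_le_mul_of_nonneg_right (abs_add_le _ _) (abs_nonneg _)
      _ ≤ (|c1*c2| + |d1*d2|) * (2*(Real.sqrt A * Real.sqrt B)) :=
          mul_le_mul_of_nonneg_left hXb (by positivity)
  rw [key]
  linarith

lemma flux_refl_int {f : ℝ → ℝ} (hf : Integrable (fun v => v * f v * sM v)) :
    Integrable (fun v => v * f (-v) * sM v) := by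
  refine hf.comp_neg.neg.congr (Filter.Eventually.of_forall fun v => ?_)
  show -((-v) * f (-v) * sM (-v)) = v * f (-v) * sM v
  rw [sM_even]; ring

lemma flux_split {f : ℝ → ℝ} (hf : Integrable (fun v => v * f v * sM v)) :
    ∫ v, v * f v * sM v
      = (∫ v in Ioi (0:ℝ), v * f v * sM v) - ∫ v in Ioi (0:ℝ), v * f (-v) * sM v := by
  rw [split_int _ hf]
  have : ∫ v in Iio (0:ℝ), v * f v * sM v = -∫ v in Ioi (0:ℝ), v * f (-v) * sM v := by
    calc ∫ v in Iio (0:ℝ), v * f v * sM v = ∫ v in Ioi (0:ℝ), (-v) * f (-v) * sM (-v) :=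
          refl_int _
      _ = ∫ v in Ioi (0:ℝ), -(v * f (-v) * sM v) := by
          refine setIntegral_congr_fun measurableSet_Ioi fun v _ => ?_
          rw [sM_even]; ring
      _ = -∫ v in Ioi (0:ℝ), v * f (-v) * sM v := integral_neg _
  rw [this]; ring

lemma lin_sub (F G H : ℝ → ℝ) (c1 c2 : ℝ)
    (iG : IntegrableOn (fun v => v * G v * sM v) (Ioi (0:ℝ)))
    (iH : IntegrableOn (fun v => v * H v * sM v) (Ioi (0:ℝ)))
    (heq : ∀ v > (0:ℝ), F v = c1 * G v + c2 * H v) :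
    ∫ v in Ioi (0:ℝ), v * F v * sM v
      = c1 * (∫ v in Ioi (0:ℝ), v * G v * sM v) + c2 * ∫ v in Ioi (0:ℝ), v * H v * sM v := by
  have e1 : ∫ v in Ioi (0:ℝ), v * F v * sM v
      = ∫ v in Ioi (0:ℝ), (c1 * (v * G v * sM v) + c2 * (v * H v * sM v)) := by
    refine setIntegral_congr_fun measurableSet_Ioi fun v hv => ?_
    rw [heq v hv]; ring
  have j1 : IntegrableOn (fun v => c1 * (v * G v * sM v)) (Ioi (0:ℝ)) := iG.const_mul _
  have j2 : IntegrableOn (fun v => c2 * (v * H v * sM v)) (Ioi (0:ℝ)) := iH.const_mul _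
  rw [e1, integral_add j1 j2, integral_const_mul, integral_const_mul]

lemma wpos_int {f : ℝ → ℝ} (h1 : Integrable (fun v => |v| * f v ^ 2))
    (hm : AEStronglyMeasurable f (volume : Measure ℝ)) :
    IntegrableOn (fun v => v * f v ^ 2) (Ioi (0:ℝ)) := by
  have := (sq_int h1 hm).integrableOn (s := Ioi (0:ℝ))
  exact (this.const_mul 2).congr (Filter.Eventually.of_forall fun v => by ring)

lemma wrefl_int {f : ℝ → ℝ} (h0 : Integrable (fun v => |v| * f v ^ 2))
    (hm : AEStronglyMeasurable (fun v => f (-v)) (volume : Measure ℝ)) :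
    IntegrableOn (fun v => v * f (-v) ^ 2) (Ioi (0:ℝ)) := by
  have := (sq_int_refl h0 hm).integrableOn (s := Ioi (0:ℝ))
  exact (this.const_mul 2).congr (Filter.Eventually.of_forall fun v => by ring)

lemma wrefl (f0 : ℝ → ℝ) :
    ∫ v in Ioi (0:ℝ), v * f0 (-v) ^ 2 = 2 * (-∫ v in Iio (0:ℝ), (v/2) * f0 v ^ 2) := by
  have R0 : ∫ v in Iio (0:ℝ), (v/2) * f0 v ^ 2 = -∫ v in Ioi (0:ℝ), (v/2) * f0 (-v) ^ 2 := by
    calc ∫ v in Iio (0:ℝ), (v/2) * f0 v ^ 2 = ∫ v in Ioi (0:ℝ), ((-v)/2) * f0 (-v) ^ 2 :=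
          refl_int _
      _ = ∫ v in Ioi (0:ℝ), -((v/2) * f0 (-v) ^ 2) := by
          congr 1; funext v; ring
      _ = -∫ v in Ioi (0:ℝ), (v/2) * f0 (-v) ^ 2 := integral_neg _
  rw [R0, neg_neg, show (2:ℝ) * ∫ v in Ioi (0:ℝ), (v/2) * f0 (-v) ^ 2
      = ∫ v in Ioi (0:ℝ), 2 * ((v/2) * f0 (-v) ^ 2) from (integral_const_mul _ _).symm]
  refine setIntegral_congr_fun measurableSet_Ioi fun v _ => ?_
  ring

lemma wpos (f1 : ℝ → ℝ) :
    ∫ v in Ioi (0:ℝ), v * f1 v ^ 2 = 2 * ∫ v in Ioi (0:ℝ), (v/2) * f1 v ^ 2 := by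
  rw [show (2:ℝ) * ∫ v in Ioi (0:ℝ), (v/2) * f1 v ^ 2
      = ∫ v in Ioi (0:ℝ), 2 * ((v/2) * f1 v ^ 2) from (integral_const_mul _ _).symm]
  refine setIntegral_congr_fun measurableSet_Ioi fun v _ => ?_
  ring

lemma flux_cs {f : ℝ → ℝ} (hm : AEStronglyMeasurable f (volume.restrict (Ioi (0:ℝ))))
    (h2 : IntegrableOn (fun v => v * f v ^ 2) (Ioi (0:ℝ))) :
    |∫ v in Ioi (0:ℝ), v * f v * sM v| ≤ Real.sqrt (∫ v in Ioi (0:ℝ), v * f v ^ 2) := by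
  have hsm : AEStronglyMeasurable sM (volume.restrict (Ioi (0:ℝ))) :=
    measurable_sM.aestronglyMeasurable.restrict
  have hsm2 : IntegrableOn (fun v => v * sM v ^ 2) (Ioi (0:ℝ)) :=
    intOn_vMw.congr (Filter.Eventually.of_forall fun v => by simp only [sM_sq])
  have hcs := cs_bound hm hsm h2 hsm2
  have hMeq : ∫ v in Ioi (0:ℝ), v * sM v ^ 2 = ∫ v in Ioi (0:ℝ), v * Mw v := by
    refine setIntegral_congr_fun measurableSet_Ioi fun v _ => ?_
    rw [sM_sq]
  have hle1 : Real.sqrt (∫ v in Ioi (0:ℝ), v * sM v ^ 2) ≤ 1 := by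
    rw [hMeq]; exact Real.sqrt_le_one.mpr int_vMw_le_one
  calc |∫ v in Ioi (0:ℝ), v * f v * sM v|
      ≤ Real.sqrt (∫ v in Ioi (0:ℝ), v * f v ^ 2)
        * Real.sqrt (∫ v in Ioi (0:ℝ), v * sM v ^ 2) := hcs
    _ ≤ Real.sqrt (∫ v in Ioi (0:ℝ), v * f v ^ 2) * 1 :=
        mul_le_mul_of_nonneg_left hle1 (Real.sqrt_nonneg _)
    _ = Real.sqrt (∫ v in Ioi (0:ℝ), v * f v ^ 2) := mul_one _

/-- Lemma `lemma: negative RHS est` of the paper: estimate of the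
boundary terms by the quantity `I(t,ε)` built from the boundary functionals
`A, B, A_x, B_x` and the entries of the feedback matrix. -/
theorem stmt9
    (h : ℝ → ℝ → ℝ → ℝ) (k00 k01 k10 k11 a t : ℝ)
    -- square integrability against |v| of h and ∂ₓh at the boundary
    (hint0 : Integrable (fun v : ℝ => |v| * (h t 0 v) ^ 2))
    (hint1 : Integrable (fun v : ℝ => |v| * (h t 1 v) ^ 2))
    (hintx0 : Integrable (fun v : ℝ => |v| * (pdx (h t) 0 v) ^ 2))
    (hintx1 : Integrable (fun v : ℝ => |v| * (pdx (h t) 1 v) ^ 2))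
    -- integrability of the flux integrands
    (hu0 : Integrable (fun v : ℝ => v * h t 0 v * sM v))
    (hu1 : Integrable (fun v : ℝ => v * h t 1 v * sM v))
    (hux0 : Integrable (fun v : ℝ => v * pdx (h t) 0 v * sM v))
    (hux1 : Integrable (fun v : ℝ => v * pdx (h t) 1 v * sM v))
    -- differentiation under the integral sign for the flux
    (hdiffux : ∀ x : ℝ, deriv (fun y => flux h t y) x = ∫ v : ℝ, v * pdx (h t) x v * sM v)
    -- boundary conditions for h and ∂ₓh
    (hbc0 : ∀ v > (0:ℝ), h t 0 v = k00 * h t 0 (-v) + k10 * h t 1 v)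
    (hbc1 : ∀ v < (0:ℝ), h t 1 v = k01 * h t 0 v + k11 * h t 1 (-v))
    (hbcx0 : ∀ v > (0:ℝ), pdx (h t) 0 v = -k00 * pdx (h t) 0 (-v) + k10 * pdx (h t) 1 v)
    (hbcx1 : ∀ v < (0:ℝ), pdx (h t) 1 v = k01 * pdx (h t) 0 v - k11 * pdx (h t) 1 (-v))
    (hk1 : k00 + k01 = 1) (hk2 : k11 + k10 = 1) (ha : 0 ≤ a) :
    -(∫ v : ℝ, (v / 2) * ((h t 1 v) ^ 2 - (h t 0 v) ^ 2))
        - (∫ v : ℝ, (v / 2) * ((pdx (h t) 1 v) ^ 2 - (pdx (h t) 0 v) ^ 2))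
        - a * (flux h t 1 * deriv (fun y => flux h t y) 1
                - flux h t 0 * deriv (fun y => flux h t y) 0)
      ≤ -2 * k00 * (1 - k00) * (Abd h t + Axbd h t)
          - 2 * k11 * (1 - k11) * (Bbd h t + Bxbd h t)
          + 2 * (|k11 * (1 - k00)| + |k00 * (1 - k11)|)
              * (Real.sqrt (Abd h t * Bbd h t) + Real.sqrt (Axbd h t * Bxbd h t))
          + 4 * a * (|1 - k11| * Real.sqrt (Bbd h t) + |1 - k00| * Real.sqrt (Abd h t))
              * (|k00| * Real.sqrt (Axbd h t) + |k11| * Real.sqrt (Bxbd h t)) := by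
  have ek01 : k01 = 1 - k00 := by linarith
  have ek10 : k10 = 1 - k11 := by linarith
  subst ek01 ek10
  -- measurability
  have hm0 : AEStronglyMeasurable (h t 0) (volume : Measure ℝ) := aesm_trace hu0
  have hm1 : AEStronglyMeasurable (h t 1) (volume : Measure ℝ) := aesm_trace hu1
  have hmx0 : AEStronglyMeasurable (pdx (h t) 0) (volume : Measure ℝ) := aesm_trace hux0
  have hmx1 : AEStronglyMeasurable (pdx (h t) 1) (volume : Measure ℝ) := aesm_trace hux1
  have hm0r : AEStronglyMeasurable (fun v => h t 0 (-v)) (volume : Measure ℝ) :=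
    aesm_trace (flux_refl_int hu0)
  have hmx0r : AEStronglyMeasurable (fun v => pdx (h t) 0 (-v)) (volume : Measure ℝ) :=
    aesm_trace (flux_refl_int hux0)
  -- the two boundary estimates
  have P1 := bdry_est (h t 0) (h t 1) k00 (1-k11) (1-k00) k11 hint0 hint1 hm0 hm1 hm0r hbc0 hbc1
  have P2 := bdry_est (pdx (h t) 0) (pdx (h t) 1) (-k00) (1-k11) (1-k00) (-k11)
    hintx0 hintx1 hmx0 hmx1 hmx0r hbcx0
    (fun v hv => by rw [hbcx1 v hv]; ring)
  -- nonnegativity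
  have hAnn : 0 ≤ -∫ v in Iio (0:ℝ), (v/2) * (h t 0 v) ^ 2 := by
    have hle : ∫ v in Iio (0:ℝ), (v/2) * (h t 0 v) ^ 2 ≤ 0 := by
      refine integral_nonpos_of_ae ?_
      filter_upwards [ae_restrict_mem measurableSet_Iio] with v hv
      have hv' : v < 0 := hv
      show (v/2) * (h t 0 v) ^ 2 ≤ (0:ℝ)
      nlinarith [sq_nonneg (h t 0 v)]
    linarith
  have hAxnn : 0 ≤ -∫ v in Iio (0:ℝ), (v/2) * (pdx (h t) 0 v) ^ 2 := by
    have hle : ∫ v in Iio (0:ℝ), (v/2) * (pdx (h t) 0 v) ^ 2 ≤ 0 := by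
      refine integral_nonpos_of_ae ?_
      filter_upwards [ae_restrict_mem measurableSet_Iio] with v hv
      have hv' : v < 0 := hv
      show (v/2) * (pdx (h t) 0 v) ^ 2 ≤ (0:ℝ)
      nlinarith [sq_nonneg (pdx (h t) 0 v)]
    linarith
  -- flux identities
  have iu1 : IntegrableOn (fun v => v * h t 1 v * sM v) (Ioi (0:ℝ)) := hu1.integrableOn
  have iur0 : IntegrableOn (fun v => v * h t 0 (-v) * sM v) (Ioi (0:ℝ)) :=
    (flux_refl_int hu0).integrableOn
  have iux1 : IntegrableOn (fun v => v * pdx (h t) 1 v * sM v) (Ioi (0:ℝ)) := hux1.integrableOn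
  have iuxr0 : IntegrableOn (fun v => v * pdx (h t) 0 (-v) * sM v) (Ioi (0:ℝ)) :=
    (flux_refl_int hux0).integrableOn
  have eu0 : flux h t 0
      = (k00 - 1) * (∫ v in Ioi (0:ℝ), v * h t 0 (-v) * sM v)
        + (1 - k11) * ∫ v in Ioi (0:ℝ), v * h t 1 v * sM v := by
    have h1 := flux_split hu0
    have h2 := lin_sub (h t 0) (fun v => h t 0 (-v)) (h t 1) k00 (1-k11) iur0 iu1 hbc0
    show (∫ v : ℝ, v * h t 0 v * sM v) = _
    rw [h1, h2]; ring
  have eu1 : flux h t 1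
      = (k00 - 1) * (∫ v in Ioi (0:ℝ), v * h t 0 (-v) * sM v)
        + (1 - k11) * ∫ v in Ioi (0:ℝ), v * h t 1 v * sM v := by
    have h1 := flux_split hu1
    have h2 := lin_sub (fun v => h t 1 (-v)) (fun v => h t 0 (-v)) (h t 1) (1-k00) k11 iur0 iu1
      (fun v hv => by
        show h t 1 (-v) = (1-k00) * h t 0 (-v) + k11 * h t 1 v
        rw [hbc1 (-v) (by linarith), neg_neg])
    show (∫ v : ℝ, v * h t 1 v * sM v) = _
    rw [h1, h2]; ring
  have eux0 : deriv (fun y => flux h t y) 0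
      = -(1 + k00) * (∫ v in Ioi (0:ℝ), v * pdx (h t) 0 (-v) * sM v)
        + (1 - k11) * ∫ v in Ioi (0:ℝ), v * pdx (h t) 1 v * sM v := by
    have h2 := lin_sub (pdx (h t) 0) (fun v => pdx (h t) 0 (-v)) (pdx (h t) 1) (-k00) (1-k11)
      iuxr0 iux1 hbcx0
    rw [hdiffux 0, flux_split hux0, h2]; ring
  have eux1 : deriv (fun y => flux h t y) 1
      = (1 + k11) * (∫ v in Ioi (0:ℝ), v * pdx (h t) 1 v * sM v)
        - (1 - k00) * ∫ v in Ioi (0:ℝ), v * pdx (h t) 0 (-v) * sM v := by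
    have h2 := lin_sub (fun v => pdx (h t) 1 (-v)) (fun v => pdx (h t) 0 (-v)) (pdx (h t) 1)
      (1-k00) (-k11) iuxr0 iux1
      (fun v hv => by
        show pdx (h t) 1 (-v) = (1-k00) * pdx (h t) 0 (-v) + (-k11) * pdx (h t) 1 v
        rw [hbcx1 (-v) (by linarith), neg_neg]; ring)
    rw [hdiffux 1, flux_split hux1, h2]; ring
  -- flux bounds
  have bQ1 : |∫ v in Ioi (0:ℝ), v * h t 0 (-v) * sM v|
      ≤ Real.sqrt 2 * Real.sqrt (-∫ v in Iio (0:ℝ), (v/2) * (h t 0 v) ^ 2) := by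
    have hb := flux_cs hm0r.restrict (wrefl_int hint0 hm0r)
    rw [wrefl (h t 0), Real.sqrt_mul (by norm_num : (0:ℝ) ≤ 2)] at hb
    exact hb
  have bK1 : |∫ v in Ioi (0:ℝ), v * h t 1 v * sM v|
      ≤ Real.sqrt 2 * Real.sqrt (∫ v in Ioi (0:ℝ), (v/2) * (h t 1 v) ^ 2) := by
    have hb := flux_cs hm1.restrict (wpos_int hint1 hm1)
    rw [wpos (h t 1), Real.sqrt_mul (by norm_num : (0:ℝ) ≤ 2)] at hb
    exact hb
  have bQ2 : |∫ v in Ioi (0:ℝ), v * pdx (h t) 0 (-v) * sM v|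
      ≤ Real.sqrt 2 * Real.sqrt (-∫ v in Iio (0:ℝ), (v/2) * (pdx (h t) 0 v) ^ 2) := by
    have hb := flux_cs hmx0r.restrict (wrefl_int hintx0 hmx0r)
    rw [wrefl (pdx (h t) 0), Real.sqrt_mul (by norm_num : (0:ℝ) ≤ 2)] at hb
    exact hb
  have bK2 : |∫ v in Ioi (0:ℝ), v * pdx (h t) 1 v * sM v|
      ≤ Real.sqrt 2 * Real.sqrt (∫ v in Ioi (0:ℝ), (v/2) * (pdx (h t) 1 v) ^ 2) := by
    have hb := flux_cs hmx1.restrict (wpos_int hintx1 hmx1)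
    rw [wpos (pdx (h t) 1), Real.sqrt_mul (by norm_num : (0:ℝ) ≤ 2)] at hb
    exact hb
  -- abbreviations for the flux arithmetic
  set Q1 : ℝ := ∫ v in Ioi (0:ℝ), v * h t 0 (-v) * sM v
  set K1 : ℝ := ∫ v in Ioi (0:ℝ), v * h t 1 v * sM v
  set Q2 : ℝ := ∫ v in Ioi (0:ℝ), v * pdx (h t) 0 (-v) * sM v
  set K2 : ℝ := ∫ v in Ioi (0:ℝ), v * pdx (h t) 1 v * sM v
  set sA : ℝ := Real.sqrt (-∫ v in Iio (0:ℝ), (v/2) * (h t 0 v) ^ 2)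
  set sB : ℝ := Real.sqrt (∫ v in Ioi (0:ℝ), (v/2) * (h t 1 v) ^ 2)
  set sAx : ℝ := Real.sqrt (-∫ v in Iio (0:ℝ), (v/2) * (pdx (h t) 0 v) ^ 2)
  set sBx : ℝ := Real.sqrt (∫ v in Ioi (0:ℝ), (v/2) * (pdx (h t) 1 v) ^ 2)
  have hs2 : Real.sqrt 2 * Real.sqrt 2 = 2 := Real.mul_self_sqrt (by norm_num)
  have P3 : -(a * (flux h t 1 * deriv (fun y => flux h t y) 1
        - flux h t 0 * deriv (fun y => flux h t y) 0))
      ≤ 4 * a * (|1 - k11| * sB + |1 - k00| * sA) * (|k00| * sAx + |k11| * sBx) := by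
    rw [eu0, eu1, eux0, eux1]
    set U : ℝ := (k00 - 1) * Q1 + (1 - k11) * K1 with hU
    set V : ℝ := 2 * k11 * K2 + 2 * k00 * Q2 with hV
    have habsU : |U| ≤ Real.sqrt 2 * (|1 - k11| * sB + |1 - k00| * sA) := by
      calc |U| ≤ |(k00 - 1) * Q1| + |(1 - k11) * K1| := abs_add_le _ _
        _ = |1 - k00| * |Q1| + |1 - k11| * |K1| := by
            rw [abs_mul, abs_mul, abs_sub_comm k00 1]
        _ ≤ |1 - k00| * (Real.sqrt 2 * sA) + |1 - k11| * (Real.sqrt 2 * sB) :=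
            add_le_add (mul_le_mul_of_nonneg_left bQ1 (abs_nonneg _))
              (mul_le_mul_of_nonneg_left bK1 (abs_nonneg _))
        _ = Real.sqrt 2 * (|1 - k11| * sB + |1 - k00| * sA) := by ring
    have habsV : |V| ≤ 2 * Real.sqrt 2 * (|k00| * sAx + |k11| * sBx) := by
      calc |V| ≤ |2 * k11 * K2| + |2 * k00 * Q2| := abs_add_le _ _
        _ = 2 * |k11| * |K2| + 2 * |k00| * |Q2| := by
            rw [abs_mul, abs_mul, abs_mul, abs_mul, abs_two]
        _ ≤ 2 * |k11| * (Real.sqrt 2 * sBx) + 2 * |k00| * (Real.sqrt 2 * sAx) :=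
            add_le_add (mul_le_mul_of_nonneg_left bK2 (by positivity))
              (mul_le_mul_of_nonneg_left bQ2 (by positivity))
        _ = 2 * Real.sqrt 2 * (|k00| * sAx + |k11| * sBx) := by ring
    have hXnn : 0 ≤ Real.sqrt 2 * (|1 - k11| * sB + |1 - k00| * sA) := by positivity
    have e1 : -(a * (U * ((1 + k11) * K2 - (1 - k00) * Q2)
          - U * (-(1 + k00) * Q2 + (1 - k11) * K2))) = -(a * (U * V)) := by
      rw [hU, hV]; ring
    calc -(a * (U * ((1 + k11) * K2 - (1 - k00) * Q2)
          - U * (-(1 + k00) * Q2 + (1 - k11) * K2)))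
        = a * (-(U * V)) := by rw [e1]; ring
      _ ≤ a * |U * V| := mul_le_mul_of_nonneg_left (neg_le_abs _) ha
      _ = a * (|U| * |V|) := by rw [abs_mul]
      _ ≤ a * ((Real.sqrt 2 * (|1 - k11| * sB + |1 - k00| * sA))
            * (2 * Real.sqrt 2 * (|k00| * sAx + |k11| * sBx))) :=
          mul_le_mul_of_nonneg_left
            (mul_le_mul habsU habsV (abs_nonneg _) hXnn) ha
      _ = 4 * a * (|1 - k11| * sB + |1 - k00| * sA) * (|k00| * sAx + |k11| * sBx) := by
          linear_combination (2 * a * (|1 - k11| * sB + |1 - k00| * sA)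
            * (|k00| * sAx + |k11| * sBx)) * hs2
  -- assemble
  unfold Abd Bbd Axbd Bxbd
  rw [Real.sqrt_mul hAnn, Real.sqrt_mul hAxnn]
  have c1 : |(1 - k00) * k11| = |k11 * (1 - k00)| := by rw [mul_comm]
  have c2 : |(-k00) * (1 - k11)| = |k00 * (1 - k11)| := by rw [neg_mul, abs_neg]
  have c3 : |(1 - k00) * (-k11)| = |k11 * (1 - k00)| := by rw [mul_neg, abs_neg, mul_comm]
  rw [c1] at P1
  rw [c2, c3] at P2
  linarith [P1, P2, P3]
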